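/- Let a, b > 0, ν ∈ (0,1), h = b/a, r = min{ν, 1-ν}, r' = min{2r, 1-2r}, and K(t) = (1+t)²/(4t). Then K(√h)^{r'} · a^(1-ν) b^ν ≤ (1-ν)a + νb − r(√a − √b)². -/

import Mathlib

open Real Finset

noncomputable def Kc (t : ℝ) : ℝ := (1 + t)^2 / (4 * t)

noncomputable def rseq (ν : ℝ) : ℕ → ℝ
  | 0 => min ν (1 - ν)
  | k + 1 => min (2 * rseq ν k) (1 - 2 * rseq ν k)

noncomputable def mfl (ν : ℝ) (k : ℕ) : ℝ := ⌊(2:ℝ)^k * ν⌋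

lemma Kc_div (u v : ℝ) (hu : 0 < u) (hv : 0 < v) :
    Kc (u/v) = (u+v)^2 / (4*u*v) := by
  unfold Kc
  field_simp
  ring

lemma core_half (x y μ : ℝ) (hx : 0 < x) (hy : 0 < y) (hμ : 0 ≤ μ) (hμ2 : μ ≤ 1/2) :
    Kc (y/x) ^ μ * (x ^ (1-μ) * y ^ μ) ≤ (1-μ)*x + μ*y := by
  have hxy : 0 < x + y := by linarith
  have hK : Kc (y/x) = (x+y)^2 / (4*x*y) := by
    rw [Kc_div y x hy hx]; ring_nf
  have key : Kc (y/x) ^ μ * (x ^ (1-μ) * y ^ μ) = x ^ (1-2*μ) * ((x+y)/2) ^ (2*μ) := by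
    rw [hK]
    rw [show ((x+y)/2 : ℝ) ^ (2*μ) = (((x+y)/2)^(2:ℕ)) ^ μ by
      rw [← Real.rpow_natCast ((x+y)/2) 2, ← Real.rpow_mul (by positivity)]; norm_num [mul_comm]]
    rw [show (((x+y)/2:ℝ))^(2:ℕ) = ((x+y)^2/(4*x*y)) * (x*y) by field_simp; ring]
    rw [Real.mul_rpow (by positivity) (by positivity),
        Real.mul_rpow (by positivity) (by positivity)]
    rw [show (1:ℝ)-μ = (1-2*μ) + μ by ring, Real.rpow_add hx]
    ring
  rw [key]
  have := Real.geom_mean_le_arith_mean2_weighted (w₁ := 1-2*μ) (w₂ := 2*μ)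
    (p₁ := x) (p₂ := (x+y)/2) (by linarith) (by linarith) hx.le (by positivity) (by ring)
  linarith [this]

lemma core (x y μ : ℝ) (hx : 0 < x) (hy : 0 < y) (hμ : 0 ≤ μ) (hμ1 : μ ≤ 1) :
    Kc (y/x) ^ (min μ (1-μ)) * (x ^ (1-μ) * y ^ μ) ≤ (1-μ)*x + μ*y := by
  rcases le_or_gt μ (1/2) with hc | hc
  · rw [min_eq_left (by linarith)]
    exact core_half x y μ hx hy hμ hc
  · rw [min_eq_right (by linarith)]
    have hsym : Kc (x/y) = Kc (y/x) := by
      rw [Kc_div x y hx hy, Kc_div y x hy hx]; ring_nf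
    have := core_half y x (1-μ) hy hx (by linarith) (by linarith)
    rw [hsym, show (1:ℝ)-(1-μ) = μ by ring] at this
    calc Kc (y/x) ^ (1-μ) * (x ^ (1-μ) * y ^ μ)
        = Kc (y/x) ^ (1-μ) * (y ^ μ * x ^ (1-μ)) := by ring
      _ ≤ μ*y + (1-μ)*x := this
      _ = (1-μ)*x + μ*y := by ring

theorem stmt2 (a b ν : ℝ) (ha : 0 < a) (hb : 0 < b) (hν : ν ∈ Set.Ioo (0:ℝ) 1)
    (h : ℝ) (hh : h = b / a) (r r' : ℝ) (hr : r = min ν (1 - ν)) (hr' : r' = min (2*r) (1 - 2*r)) :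
    Kc (Real.sqrt h) ^ r' * (a ^ (1 - ν) * b ^ ν) ≤ (1 - ν) * a + ν * b - r * (Real.sqrt a - Real.sqrt b)^2 := by
  obtain ⟨hν0, hν1⟩ := hν
  have hsa : (0:ℝ) < Real.sqrt a := Real.sqrt_pos.mpr ha
  have hsb : (0:ℝ) < Real.sqrt b := Real.sqrt_pos.mpr hb
  have hsa2 : Real.sqrt a ^ 2 = a := Real.sq_sqrt ha.le
  have hsb2 : Real.sqrt b ^ 2 = b := Real.sq_sqrt hb.le
  have hsqh : Real.sqrt h = Real.sqrt b / Real.sqrt a := by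
    rw [hh, Real.sqrt_div hb.le]
  have hrpow : ∀ x : ℝ, 0 < x → ∀ t : ℝ, Real.sqrt x ^ t = x ^ (t/2) := by
    intro x hx t
    rw [Real.sqrt_eq_rpow, ← Real.rpow_mul hx.le]
    congr 1
    ring
  rcases le_or_gt ν (1/2) with hc | hc
  · -- r = ν
    have hrν : r = ν := by rw [hr, min_eq_left (by linarith)]
    have hcore := core a (Real.sqrt a * Real.sqrt b) (2*ν) ha (by positivity)
      (by linarith) (by linarith)
    have hyx : Real.sqrt a * Real.sqrt b / a = Real.sqrt h := by
      rw [hsqh]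
      field_simp
      linear_combination hsa2
    rw [hyx] at hcore
    have hmin : min (2*ν) (1 - 2*ν) = r' := by rw [hr', hrν]
    rw [hmin] at hcore
    have hpow : a ^ (1 - 2*ν) * (Real.sqrt a * Real.sqrt b) ^ (2*ν)
        = a ^ (1 - ν) * b ^ ν := by
      rw [Real.mul_rpow hsa.le hsb.le, hrpow a ha, hrpow b hb,
          show (2*ν)/2 = ν by ring,
          show a ^ (1-2*ν) * (a ^ ν * b ^ ν) = (a ^ (1-2*ν) * a ^ ν) * b ^ ν by ring,
          ← Real.rpow_add ha]
      ring_nf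
    rw [hpow] at hcore
    rw [hrν]
    nlinarith [hcore, hsa2, hsb2]
  · -- r = 1 - ν
    have hrν : r = 1 - ν := by rw [hr, min_eq_right (by linarith)]
    have hcore := core b (Real.sqrt a * Real.sqrt b) (2*(1-ν)) hb (by positivity)
      (by linarith) (by linarith)
    have hyx : Kc (Real.sqrt a * Real.sqrt b / b) = Kc (Real.sqrt h) := by
      rw [show Real.sqrt a * Real.sqrt b / b = Real.sqrt a / Real.sqrt b by
        field_simp; linear_combination hsb2]
      rw [hsqh, Kc_div _ _ hsa hsb, Kc_div _ _ hsb hsa]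
      ring_nf
    rw [hyx] at hcore
    have hmin : min (2*(1-ν)) (1 - 2*(1-ν)) = r' := by
      rw [hr', hrν]
    rw [hmin] at hcore
    have hpow : b ^ (1 - 2*(1-ν)) * (Real.sqrt a * Real.sqrt b) ^ (2*(1-ν))
        = a ^ (1 - ν) * b ^ ν := by
      rw [Real.mul_rpow hsa.le hsb.le, hrpow a ha, hrpow b hb,
          show (2*(1-ν))/2 = 1-ν by ring,
          show b ^ (1-2*(1-ν)) * (a ^ (1-ν) * b ^ (1-ν))
            = a ^ (1-ν) * (b ^ (1-2*(1-ν)) * b ^ (1-ν)) by ring,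
          ← Real.rpow_add hb]
      ring_nf
    rw [hpow] at hcore
    rw [hrν]
    nlinarith [hcore, hsa2, hsb2]
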